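/- The q-Dyson product D_n(x, a, q) = ∏_{0 ≤ i < j ≤ n} (x_i/x_j; q)_{a_i} (q x_j/x_i; q)_{a_j} satisfies π(D_n(x, (a_0,...,a_n), q)) = D_n(x, (a_n, a_0, ..., a_{n-1}), q), where π is the substitution x_i ↦ x_{i+1} for i < n and x_n ↦ x_0/q. Consequently, for any Laurent polynomial L(x), CT_x L(x) D_n(x, a, q) = CT_x π(L(x)) D_n(x, (a_n, a_0, ..., a_{n-1}), q). -/

import Mathlib

open Finsupp
noncomputable section
abbrev Lau (n : ℕ) := AddMonoidAlgebra (RatFunc ℚ) (Fin (n+1) →₀ ℤ)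
def qq : RatFunc ℚ := RatFunc.X
def sc {n : ℕ} (c : RatFunc ℚ) : Lau n := AddMonoidAlgebra.single 0 c
def mono {n : ℕ} (e : Fin (n+1) →₀ ℤ) : Lau n := AddMonoidAlgebra.single e 1
def CT {n : ℕ} (f : Lau n) : RatFunc ℚ := f.coeff 0
def qDyson (n : ℕ) (a : Fin (n+1) → ℕ) : Lau n :=
  ∏ p ∈ Finset.univ.filter (fun p : Fin (n+1) × Fin (n+1) => p.1 < p.2),
    ((∏ k ∈ Finset.range (a p.1),
        (1 - sc (qq ^ k) * mono (single p.1 1 - single p.2 1))) *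
     (∏ k ∈ Finset.range (a p.2),
        (1 - sc (qq ^ (k+1)) * mono (single p.2 1 - single p.1 1))))
def cyc {n : ℕ} (e : Fin (n+1) →₀ ℤ) : Fin (n+1) →₀ ℤ :=
  Finsupp.equivMapDomain (finRotate (n+1)) e
/-- the substitution `π F (x_0,…,x_n) = F (x_1, …, x_n, x_0/q)` -/
def piOp {n : ℕ} (F : Lau n) : Lau n :=
  F.coeff.sum fun e c => AddMonoidAlgebra.single (cyc e) (c * qq ^ (-(e (Fin.last n))))


namespace PiAux
variable {n : ℕ}
lemma qq_ne_zero : (qq : RatFunc ℚ) ≠ 0 := RatFunc.X_ne_zero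
lemma cyc_eq (e : Fin (n+1) →₀ ℤ) :
    cyc e = Finsupp.domCongr (M := ℤ) (finRotate (n+1)) e := rfl
lemma cyc_add (e f : Fin (n+1) →₀ ℤ) : cyc (e+f) = cyc e + cyc f := by
  simp only [cyc_eq, map_add]
lemma cyc_zero : cyc (0 : Fin (n+1) →₀ ℤ) = 0 := by simp only [cyc_eq, map_zero]
lemma cyc_sub (e f : Fin (n+1) →₀ ℤ) : cyc (e - f) = cyc e - cyc f := by
  simp only [cyc_eq, map_sub]
lemma cyc_single (i : Fin (n+1)) (m : ℤ) :
    cyc (Finsupp.single i m) = Finsupp.single (finRotate (n+1) i) m :=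
  Finsupp.equivMapDomain_single _ _ _
lemma cyc_eq_zero {e : Fin (n+1) →₀ ℤ} (h : cyc e = 0) : e = 0 := by
  rw [cyc_eq] at h
  exact (AddEquiv.map_eq_zero_iff _).mp h

def gmap (n : ℕ) : Multiplicative (Fin (n+1) →₀ ℤ) →* Lau n where
  toFun e := AddMonoidAlgebra.single (cyc e.toAdd) (qq ^ (-(e.toAdd (Fin.last n))))
  map_one' := by
    show AddMonoidAlgebra.single (cyc (0 : Fin (n+1) →₀ ℤ))
      (qq ^ (-((0 : Fin (n+1) →₀ ℤ) (Fin.last n)))) = 1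
    simp [cyc_zero, AddMonoidAlgebra.one_def]
  map_mul' e f := by
    show AddMonoidAlgebra.single (cyc (e.toAdd + f.toAdd))
      (qq ^ (-((e.toAdd + f.toAdd) (Fin.last n)))) = _
    rw [AddMonoidAlgebra.single_mul_single, cyc_add]
    congr 1
    rw [Finsupp.add_apply, neg_add, zpow_add₀ qq_ne_zero]

def piHom (n : ℕ) : Lau n →+* Lau n :=
  AddMonoidAlgebra.liftNCRingHom (AddMonoidAlgebra.singleZeroRingHom) (gmap n)
    (fun _ _ => Commute.all _ _)

lemma piHom_single (e : Fin (n+1) →₀ ℤ) (c : RatFunc ℚ) :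
    piHom n (AddMonoidAlgebra.single e c) =
      AddMonoidAlgebra.single (cyc e) (c * qq ^ (-(e (Fin.last n)))) := by
  simp only [piHom, AddMonoidAlgebra.liftNCRingHom]
  show AddMonoidAlgebra.liftNC _ _ _ = _
  rw [AddMonoidAlgebra.liftNC_single]
  show AddMonoidAlgebra.single 0 c * AddMonoidAlgebra.single (cyc e) _ = _
  rw [AddMonoidAlgebra.single_mul_single, zero_add]
  rfl

lemma piHom_eq (F : Lau n) : piHom n F = piOp F := by
  unfold piOp
  conv_lhs => rw [← AddMonoidAlgebra.sum_coeff_single F]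
  rw [map_finsuppSum]
  exact Finsupp.sum_congr fun e _ => piHom_single e _

lemma CT_piOp (F : Lau n) : CT (piOp F) = CT F := by
  unfold CT piOp
  rw [AddMonoidAlgebra.coeff_finsuppSum, Finsupp.sum_apply]
  have h1 : (F.coeff.sum fun e c =>
      (AddMonoidAlgebra.single (cyc e) (c * qq ^ (-(e (Fin.last n)))) : Lau n).coeff 0)
      = F.coeff.sum fun e c => (Finsupp.single e c : (Fin (n+1) →₀ ℤ) →₀ RatFunc ℚ) 0 := by
    apply Finsupp.sum_congr
    intro e _
    by_cases he : e = 0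
    · subst he
      simp [cyc_zero, AddMonoidAlgebra.coeff_single, Finsupp.single_apply]
    · have hc : cyc e ≠ 0 := fun h => he (cyc_eq_zero h)
      show (Finsupp.single (cyc e) _ : (Fin (n+1) →₀ ℤ) →₀ RatFunc ℚ) 0 = _
      rw [Finsupp.single_apply, Finsupp.single_apply, if_neg hc, if_neg he]
  rw [h1, ← Finsupp.sum_apply, Finsupp.sum_single]

lemma sc_mul_sc (c d : RatFunc ℚ) : (sc c : Lau n) * sc d = sc (c * d) := by
  rw [sc, sc, sc, AddMonoidAlgebra.single_mul_single, zero_add]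

lemma piHom_sc (c : RatFunc ℚ) : piHom n (sc c) = sc c := by
  rw [sc, piHom_single]
  simp [cyc_zero, sc]

lemma piHom_mono (e : Fin (n+1) →₀ ℤ) :
    piHom n (mono e) = sc (qq ^ (-(e (Fin.last n)))) * mono (cyc e) := by
  rw [mono, piHom_single, sc, mono, AddMonoidAlgebra.single_mul_single, zero_add, one_mul, mul_one]

lemma piHom_factor (m : ℤ) (i j : Fin (n+1)) :
    piHom n (1 - sc (qq ^ m) * mono (Finsupp.single i 1 - Finsupp.single j 1)) =
      1 - sc (qq ^ (m - ((Finsupp.single i 1 - Finsupp.single j 1 :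
            Fin (n+1) →₀ ℤ) (Fin.last n)))) *
        mono (Finsupp.single (finRotate (n+1) i) 1 -
              Finsupp.single (finRotate (n+1) j) 1) := by
  rw [map_sub, map_one, map_mul, piHom_sc, piHom_mono, ← mul_assoc, sc_mul_sc,
    cyc_sub, cyc_single, cyc_single, ← zpow_add₀ qq_ne_zero, ← sub_eq_add_neg]

lemma eval_last (i j : Fin (n+1)) :
    ((Finsupp.single i 1 - Finsupp.single j 1 : Fin (n+1) →₀ ℤ) (Fin.last n)) =
      (if i = Fin.last n then 1 else 0) - (if j = Fin.last n then 1 else 0) := by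
  rw [Finsupp.sub_apply, Finsupp.single_apply, Finsupp.single_apply]

lemma factor_eq (m m' : ℕ) (i j : Fin (n+1))
    (h : (m : ℤ) - ((Finsupp.single i 1 - Finsupp.single j 1 :
        Fin (n+1) →₀ ℤ) (Fin.last n)) = (m' : ℤ)) :
    piHom n (1 - sc (qq ^ m) * mono (Finsupp.single i 1 - Finsupp.single j 1)) =
      1 - sc (qq ^ m') * mono (Finsupp.single (finRotate (n+1) i) 1 -
        Finsupp.single (finRotate (n+1) j) 1) := by
  rw [← zpow_natCast qq m, piHom_factor, h, zpow_natCast]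

lemma rho_val (i : Fin (n+1)) :
    ((finRotate (n+1)) i).val = if i = Fin.last n then 0 else i.val + 1 := by
  rw [finRotate_succ_apply, Fin.val_add_one]

lemma ne_last_of_lt {i j : Fin (n+1)} (h : i < j) : i ≠ Fin.last n := by
  intro h'
  rw [h'] at h
  exact absurd h (Fin.le_last j).not_gt

lemma main1 (a : Fin (n+1) → ℕ) :
    piHom n (qDyson n a) = qDyson n (a ∘ (finRotate (n+1)).symm) := by
  unfold qDyson
  rw [map_prod]
  set ρ := finRotate (n+1) with hρ
  have hlast : ρ (Fin.last n) = 0 := finRotate_last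
  have hsymm0 : ρ.symm 0 = Fin.last n := by rw [Equiv.symm_apply_eq, hlast]
  have hrho0 : ∀ i : Fin (n+1), ρ i = 0 ↔ i = Fin.last n := by
    intro i
    rw [← hlast]
    exact ⟨fun h => ρ.injective h, fun h => by rw [h]⟩
  have hlt : ∀ i j : Fin (n+1), i ≠ Fin.last n → j ≠ Fin.last n → (ρ i < ρ j ↔ i < j) := by
    intro i j hi hj
    rw [Fin.lt_def, Fin.lt_def, rho_val, rho_val, if_neg hi, if_neg hj]
    omega
  have hpos : ∀ i : Fin (n+1), i ≠ Fin.last n → (0 : Fin (n+1)) < ρ i := by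
    intro i hi
    rw [Fin.lt_def, rho_val, if_neg hi]
    simp
  apply Finset.prod_nbij'
    (i := fun p : Fin (n+1) × Fin (n+1) =>
      if p.2 = Fin.last n then (ρ p.2, ρ p.1) else (ρ p.1, ρ p.2))
    (j := fun q : Fin (n+1) × Fin (n+1) =>
      if q.1 = 0 then (ρ.symm q.2, ρ.symm q.1) else (ρ.symm q.1, ρ.symm q.2))
  · -- hi : maps into target set
    rintro ⟨p1, p2⟩ hp
    rw [Finset.mem_filter] at hp ⊢
    obtain ⟨-, hp⟩ := hp
    refine ⟨Finset.mem_univ _, ?_⟩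
    dsimp only at hp ⊢
    by_cases h2 : p2 = Fin.last n
    · rw [if_pos h2, h2, hlast]
      exact hpos p1 (ne_last_of_lt hp)
    · rw [if_neg h2]
      exact (hlt _ _ (ne_last_of_lt hp) h2).mpr hp
  · -- hj
    rintro ⟨q1, q2⟩ hq
    rw [Finset.mem_filter] at hq ⊢
    obtain ⟨-, hq⟩ := hq
    refine ⟨Finset.mem_univ _, ?_⟩
    obtain ⟨i, rfl⟩ : ∃ i, q1 = ρ i := ⟨ρ.symm q1, (ρ.apply_symm_apply q1).symm⟩
    obtain ⟨j, rfl⟩ : ∃ j, q2 = ρ j := ⟨ρ.symm q2, (ρ.apply_symm_apply q2).symm⟩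
    dsimp only at hq ⊢
    have hj : j ≠ Fin.last n := by
      intro h
      rw [h, hlast] at hq
      exact absurd hq (Fin.not_lt_zero _)
    by_cases hi : i = Fin.last n
    · rw [if_pos ((hrho0 i).mpr hi), Equiv.symm_apply_apply, Equiv.symm_apply_apply, hi]
      exact lt_of_le_of_ne (Fin.le_last j) hj
    · rw [if_neg (fun h => hi ((hrho0 i).mp h)), Equiv.symm_apply_apply, Equiv.symm_apply_apply]
      exact (hlt i j hi hj).mp hq
  · -- left_inv
    rintro ⟨p1, p2⟩ hp
    rw [Finset.mem_filter] at hp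
    obtain ⟨-, hp⟩ := hp
    dsimp only at hp ⊢
    by_cases h2 : p2 = Fin.last n
    · rw [if_pos h2, h2, hlast]
      dsimp only
      rw [if_pos rfl, Equiv.symm_apply_apply, hsymm0, ← h2]
    · rw [if_neg h2]
      dsimp only
      rw [if_neg (fun h => (ne_last_of_lt hp) ((hrho0 p1).mp h)), Equiv.symm_apply_apply,
        Equiv.symm_apply_apply]
  · -- right_inv
    rintro ⟨q1, q2⟩ hq
    rw [Finset.mem_filter] at hq
    obtain ⟨-, hq⟩ := hq
    obtain ⟨i, rfl⟩ : ∃ i, q1 = ρ i := ⟨ρ.symm q1, (ρ.apply_symm_apply q1).symm⟩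
    obtain ⟨j, rfl⟩ : ∃ j, q2 = ρ j := ⟨ρ.symm q2, (ρ.apply_symm_apply q2).symm⟩
    dsimp only at hq ⊢
    have hj : j ≠ Fin.last n := by
      intro h
      rw [h, hlast] at hq
      exact absurd hq (Fin.not_lt_zero _)
    by_cases hi : i = Fin.last n
    · rw [if_pos ((hrho0 i).mpr hi), Equiv.symm_apply_apply, Equiv.symm_apply_apply]
      dsimp only
      rw [if_pos hi]
    · rw [if_neg (fun h => hi ((hrho0 i).mp h)), Equiv.symm_apply_apply, Equiv.symm_apply_apply]
      dsimp only
      rw [if_neg hj]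
  · -- factor equality
    rintro ⟨p1, p2⟩ hp
    rw [Finset.mem_filter] at hp
    obtain ⟨-, hp⟩ := hp
    dsimp only at hp ⊢
    have h1 : p1 ≠ Fin.last n := ne_last_of_lt hp
    rw [map_mul, map_prod, map_prod]
    by_cases h2 : p2 = Fin.last n
    · rw [if_pos h2]
      dsimp only
      simp only [Function.comp_apply, Equiv.symm_apply_apply]
      rw [mul_comm]
      congr 1
      · refine Finset.prod_congr rfl fun k _ => factor_eq _ _ _ _ ?_
        rw [eval_last, if_pos h2, if_neg h1]
        push_cast
        ring
      · refine Finset.prod_congr rfl fun k _ => factor_eq _ _ _ _ ?_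
        rw [eval_last, if_neg h1, if_pos h2]
        push_cast
        ring
    · rw [if_neg h2]
      dsimp only
      simp only [Function.comp_apply, Equiv.symm_apply_apply]
      congr 1
      · refine Finset.prod_congr rfl fun k _ => factor_eq _ _ _ _ ?_
        rw [eval_last, if_neg h1, if_neg h2]
        push_cast
        ring
      · refine Finset.prod_congr rfl fun k _ => factor_eq _ _ _ _ ?_
        rw [eval_last, if_neg h2, if_neg h1]
        push_cast
        ring
end PiAux

/-- `π` cyclically permutes the parameters of the q-Dyson product
(`(a_0,…,a_n) ↦ (a_n, a_0, …, a_{n-1})`), and consequently constant terms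
against the q-Dyson product may be computed after applying `π`. -/
theorem piOp_qDyson (n : ℕ) (a : Fin (n+1) → ℕ) :
    piOp (qDyson n a) = qDyson n (a ∘ (finRotate (n+1)).symm) ∧
    ∀ L : Lau n, CT (L * qDyson n a) =
      CT (piOp L * qDyson n (a ∘ (finRotate (n+1)).symm)) := by
  have h1 : piOp (qDyson n a) = qDyson n (a ∘ (finRotate (n+1)).symm) := by
    rw [← PiAux.piHom_eq]
    exact PiAux.main1 a
  refine ⟨h1, fun L => ?_⟩
  rw [← PiAux.CT_piOp (L * qDyson n a), ← PiAux.piHom_eq, map_mul,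
    PiAux.piHom_eq, PiAux.piHom_eq, h1]
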